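/- Let g: ℝ → ℝ be weakly differentiable with E|g'(x₀ + σU)| < ∞ where U ~ N(0,1), and let x̃ = x₀ + σU for fixed x₀ ∈ ℝ. Then E[(g(x̃) − x₀)²] = E[(g(x̃) − x̃)²] − σ² + 2σ² E[g'(x̃)]. -/

import Mathlib

open MeasureTheory ProbabilityTheory Real Filter Set Topology
open scoped ENNReal NNReal

noncomputable def phi : ℝ → ℝ := gaussianPDFReal 0 1

lemma phi_eq : phi = fun x => (Real.sqrt (2*π))⁻¹ * rexp (-x^2/2) := by
  ext x; simp [phi, gaussianPDFReal]

lemma phi_nonneg (x : ℝ) : 0 ≤ phi x := gaussianPDFReal_nonneg 0 1 x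

lemma phi_hasDerivAt (x : ℝ) : HasDerivAt phi (-x * phi x) x := by
  rw [phi_eq]
  have h1 : HasDerivAt (fun x : ℝ => -x^2/2) (-x) x := by
    have := ((hasDerivAt_pow 2 x).neg.div_const 2)
    refine this.congr_deriv ?_; simp; ring
  have h2 := (h1.exp).const_mul (Real.sqrt (2*π))⁻¹
  refine h2.congr_deriv ?_; simp only []; ring

lemma tendsto_zero_of_integrable_atTop {F : ℝ → ℝ} (hF : Integrable F) {L : ℝ}
    (h : Tendsto F atTop (𝓝 L)) : L = 0 := by
  by_contra hL
  have hε : 0 < |L|/2 := by positivity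
  obtain ⟨a, ha⟩ := (Metric.tendsto_nhds.mp h (|L|/2) hε).exists_forall_of_atTop
  have hconst : IntegrableOn (fun _ : ℝ => |L|/2) (Ioi a) volume := by
    refine Integrable.mono' hF.integrableOn.norm aestronglyMeasurable_const ?_
    refine (ae_restrict_iff' measurableSet_Ioi).mpr (ae_of_all _ fun x hx => ?_)
    have := ha x (le_of_lt hx)
    rw [Real.dist_eq] at this
    have h1 : |L| - |F x| ≤ |L - F x| := by
      have := abs_sub_abs_le_abs_sub L (F x); linarith
    rw [Real.norm_of_nonneg (by positivity), Real.norm_eq_abs]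
    rw [abs_sub_comm] at this
    linarith
  rw [integrableOn_const_iff] at hconst
  rcases hconst with h1 | h2
  · exact hL (by simpa using h1)
  · simp [Real.volume_Ioi] at h2

lemma tendsto_zero_of_integrable_atBot {F : ℝ → ℝ} (hF : Integrable F) {L : ℝ}
    (h : Tendsto F atBot (𝓝 L)) : L = 0 := by
  have : Tendsto (fun x => F (-x)) atTop (𝓝 L) :=
    h.comp tendsto_neg_atTop_atBot
  refine tendsto_zero_of_integrable_atTop ?_ this
  exact hF.comp_neg

lemma stein_core {f f' : ℝ → ℝ} (hderiv : ∀ x, HasDerivAt f (f' x) x)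
    (hf : Integrable (fun x => f x * phi x))
    (hf' : Integrable (fun x => f' x * phi x))
    (hxf : Integrable (fun x => (x * f x) * phi x)) :
    ∫ x, (x * f x) * phi x = ∫ x, f' x * phi x := by
  set F : ℝ → ℝ := fun x => f x * phi x with hF_def
  set F' : ℝ → ℝ := fun x => f' x * phi x - (x * f x) * phi x with hF'_def
  have hF' : ∀ x, HasDerivAt F (F' x) x := by
    intro x
    have := (hderiv x).mul (phi_hasDerivAt x)
    refine this.congr_deriv ?_
    simp only [hF'_def]; ring
  have hF'int : Integrable F' := hf'.sub hxf
  -- limits at ±∞ exist and are 0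
  have htop : Tendsto F atTop (𝓝 (limUnder atTop F)) :=
    tendsto_limUnder_of_hasDerivAt_of_integrableOn_Ioi (a := 0)
      (fun x _ => hF' x) hF'int.integrableOn
  have hbot : Tendsto F atBot (𝓝 (limUnder atBot F)) :=
    tendsto_limUnder_of_hasDerivAt_of_integrableOn_Iic (a := 0)
      (fun x _ => hF' x) hF'int.integrableOn
  have htop0 : limUnder atTop F = 0 := tendsto_zero_of_integrable_atTop hf htop
  have hbot0 : limUnder atBot F = 0 := tendsto_zero_of_integrable_atBot hf hbot
  rw [htop0] at htop; rw [hbot0] at hbot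
  have hIoi : ∫ x in Ioi (0:ℝ), F' x = 0 - F 0 :=
    integral_Ioi_of_hasDerivAt_of_tendsto' (fun x _ => hF' x) hF'int.integrableOn htop
  have hIic : ∫ x in Iic (0:ℝ), F' x = F 0 - 0 :=
    integral_Iic_of_hasDerivAt_of_tendsto' (fun x _ => hF' x) hF'int.integrableOn hbot
  have hsplit := intervalIntegral.integral_Iic_add_Ioi (b := (0:ℝ))
    hF'int.integrableOn hF'int.integrableOn
  have hzero : ∫ x, F' x = 0 := by linarith [hsplit, hIoi, hIic]
  have := integral_sub hf' hxf
  rw [hF'_def] at hzero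
  rw [hzero] at this
  linarith [this.symm]

lemma gaussian_eq_density : gaussianReal 0 1 = volume.withDensity (gaussianPDF 0 1) :=
  gaussianReal_of_var_ne_zero 0 one_ne_zero

lemma gaussianPDF_eq_nnreal : gaussianPDF 0 1 = fun x => ((phi x).toNNReal : ℝ≥0∞) := rfl

lemma integrable_gaussian_iff {h : ℝ → ℝ} :
    Integrable h (gaussianReal 0 1) ↔ Integrable (fun x => h x * phi x) volume := by
  rw [gaussian_eq_density,
    integrable_withDensity_iff (measurable_gaussianPDF 0 1)
      (ae_of_all _ fun x => ENNReal.ofReal_lt_top)]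
  simp_rw [show ∀ x, (gaussianPDF 0 1 x).toReal = phi x from
    fun x => ENNReal.toReal_ofReal (phi_nonneg x)]

lemma integral_gaussian_eq (h : ℝ → ℝ) :
    ∫ x, h x ∂(gaussianReal 0 1) = ∫ x, h x * phi x := by
  rw [gaussian_eq_density, gaussianPDF_eq_nnreal,
    integral_withDensity_eq_integral_smul (f := fun x => (phi x).toNNReal)
      ((measurable_gaussianPDFReal 0 1).real_toNNReal) h]
  congr 1; ext x
  rw [NNReal.smul_def, Real.coe_toNNReal _ (phi_nonneg x), smul_eq_mul, mul_comm]

lemma stein_gaussian {f f' : ℝ → ℝ} (hderiv : ∀ x, HasDerivAt f (f' x) x)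
    (hf : Integrable f (gaussianReal 0 1)) (hf' : Integrable f' (gaussianReal 0 1))
    (hxf : Integrable (fun x => x * f x) (gaussianReal 0 1)) :
    ∫ x, x * f x ∂(gaussianReal 0 1) = ∫ x, f' x ∂(gaussianReal 0 1) := by
  rw [integral_gaussian_eq, integral_gaussian_eq]
  exact stein_core hderiv (integrable_gaussian_iff.mp hf) (integrable_gaussian_iff.mp hf')
    (integrable_gaussian_iff.mp hxf)

lemma integrable_id_gaussian : Integrable (fun x : ℝ => x) (gaussianReal 0 1) := by
  rw [integrable_gaussian_iff]
  have h := (integrable_mul_exp_neg_mul_sq (by norm_num : (0:ℝ) < 1/2)).const_mul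
    (Real.sqrt (2*π))⁻¹
  refine h.congr (ae_of_all _ fun x => ?_)
  simp only [phi_eq]
  rw [show -x^2/2 = -(1/2 : ℝ) * x^2 by ring]
  ring

lemma integrable_sq_gaussian : Integrable (fun x : ℝ => x^2) (gaussianReal 0 1) := by
  rw [integrable_gaussian_iff]
  have h := (integrable_rpow_mul_exp_neg_mul_sq (by norm_num : (0:ℝ) < 1/2)
    (by norm_num : (-1:ℝ) < 2)).const_mul (Real.sqrt (2*π))⁻¹
  refine h.congr (ae_of_all _ fun x => ?_)
  simp only [phi_eq, Real.rpow_two]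
  rw [show -x^2/2 = -(1/2 : ℝ) * x^2 by ring]
  ring

lemma integral_id_gaussian : ∫ x, x ∂(gaussianReal 0 1) = 0 := by
  have h := stein_gaussian (f := fun _ => (1:ℝ)) (f' := fun _ => (0:ℝ))
    (fun x => hasDerivAt_const x 1) (integrable_const 1) (integrable_const 0)
    (by simpa using integrable_id_gaussian)
  simpa using h

lemma integral_sq_gaussian : ∫ x, x^2 ∂(gaussianReal 0 1) = 1 := by
  have h := stein_gaussian (f := fun x => x) (f' := fun _ => (1:ℝ))
    (fun x => hasDerivAt_id x) integrable_id_gaussian (integrable_const 1)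
    (by simpa [sq] using integrable_sq_gaussian)
  simp only [integral_const, measure_univ, ENNReal.toReal_one, one_smul, smul_eq_mul] at h
  rw [show (fun x : ℝ => x^2) = fun x : ℝ => x * x from funext fun x => sq x]
  rw [h]; simp

lemma key_gaussian (x₀ σ : ℝ) (hσ : 0 < σ) (g g' : ℝ → ℝ)
    (hg : ∀ x, HasDerivAt g (g' x) x)
    (hA : Integrable (fun u => g' (x₀ + σ * u)) (gaussianReal 0 1))
    (hB : Integrable (fun u => (g (x₀ + σ * u) - x₀) ^ 2) (gaussianReal 0 1))
    (hC : Integrable (fun u => (g (x₀ + σ * u) - (x₀ + σ * u)) ^ 2) (gaussianReal 0 1)) :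
    ∫ u, (g (x₀ + σ * u) - x₀) ^ 2 ∂(gaussianReal 0 1)
      = ∫ u, (g (x₀ + σ * u) - (x₀ + σ * u)) ^ 2 ∂(gaussianReal 0 1)
        - σ ^ 2 + 2 * σ ^ 2 * ∫ u, g' (x₀ + σ * u) ∂(gaussianReal 0 1) := by
  set γ := gaussianReal 0 1 with hγ
  set f : ℝ → ℝ := fun u => g (x₀ + σ * u) with hf_def
  have hfd : ∀ u, HasDerivAt f (σ * g' (x₀ + σ * u)) u := by
    intro u
    have h1 : HasDerivAt (fun u : ℝ => x₀ + σ * u) σ u := by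
      simpa using ((hasDerivAt_id u).const_mul σ).const_add x₀
    have := (hg (x₀ + σ * u)).comp u h1
    simpa [mul_comm, hf_def, Function.comp_def] using this
  have hfc : Continuous f := by
    have : Differentiable ℝ f := fun u => (hfd u).differentiableAt
    exact this.continuous
  have Iu : Integrable (fun u : ℝ => u) γ := integrable_id_gaussian
  have Iu2 : Integrable (fun u : ℝ => u ^ 2) γ := integrable_sq_gaussian
  have hBnd : Integrable (fun u => (f u - x₀) ^ 2 + 1) γ := hB.add (integrable_const 1)
  have Ifsub : Integrable (fun u => f u - x₀) γ := by
    refine Integrable.mono' hBnd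
      ((hfc.sub continuous_const).aestronglyMeasurable) (ae_of_all _ fun u => ?_)
    rw [Real.norm_eq_abs]
    nlinarith [sq_nonneg (|f u - x₀| - 1), sq_abs (f u - x₀), abs_nonneg (f u - x₀)]
  have If : Integrable f γ := by
    have := Ifsub.add (integrable_const x₀)
    refine this.congr (ae_of_all _ fun u => ?_); simp
  have Ixf : Integrable (fun u => u * f u) γ := by
    have h := (((hB.sub hC).add ((Iu.const_mul (2 * σ * x₀)).add
      (Iu2.const_mul (σ ^ 2)))).mul_const ((2 * σ)⁻¹))
    refine h.congr (ae_of_all _ fun u => ?_)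
    have h2σ : (2 * σ) ≠ 0 := by positivity
    field_simp
    simp only [Pi.add_apply, Pi.sub_apply, hf_def]
    ring
  have stein := stein_gaussian hfd If (hA.const_mul σ) Ixf
  rw [integral_const_mul] at stein
  have I1 : Integrable (fun u => 2 * σ * (u * f u)) γ := Ixf.const_mul _
  have I2 : Integrable (fun u : ℝ => 2 * σ * x₀ * u) γ := Iu.const_mul _
  have I3 : Integrable (fun u : ℝ => σ ^ 2 * u ^ 2) γ := Iu2.const_mul _
  have I12 : Integrable (fun u => 2 * σ * (u * f u) - 2 * σ * x₀ * u) γ := I1.sub I2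
  have Irest : Integrable (fun u => 2 * σ * (u * f u) - 2 * σ * x₀ * u - σ ^ 2 * u ^ 2) γ :=
    I12.sub I3
  have expand : ∫ u, (f u - x₀) ^ 2 ∂γ
      = ∫ u, ((f u - (x₀ + σ * u)) ^ 2
        + (2 * σ * (u * f u) - 2 * σ * x₀ * u - σ ^ 2 * u ^ 2)) ∂γ :=
    integral_congr_ae (ae_of_all _ fun u => by ring)
  rw [expand, integral_add hC Irest, integral_sub I12 I3, integral_sub I1 I2,
    integral_const_mul, integral_const_mul, integral_const_mul,
    stein, integral_id_gaussian, integral_sq_gaussian]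
  ring

/-- Scalar Stein unbiased risk estimate (SURE) for a differentiable denoiser g
applied to x̃ = x₀ + σU with U standard Gaussian. -/
theorem scalar_sure
    {Ω : Type*} [MeasureSpace Ω] (μ : Measure Ω) [IsProbabilityMeasure μ]
    (U : Ω → ℝ) (hU : Measurable U)
    (hUlaw : Measure.map U μ = gaussianReal 0 1)
    (x₀ σ : ℝ) (hσ : 0 < σ)
    (g g' : ℝ → ℝ) (hg : ∀ x, HasDerivAt g (g' x) x)
    (hint_g' : Integrable (fun ω => g' (x₀ + σ * U ω)) μ)
    (hint1 : Integrable (fun ω => (g (x₀ + σ * U ω) - x₀) ^ 2) μ)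
    (hint2 : Integrable (fun ω => (g (x₀ + σ * U ω) - (x₀ + σ * U ω)) ^ 2) μ) :
    ∫ ω, (g (x₀ + σ * U ω) - x₀) ^ 2 ∂μ
      = ∫ ω, (g (x₀ + σ * U ω) - (x₀ + σ * U ω)) ^ 2 ∂μ
        - σ ^ 2 + 2 * σ ^ 2 * ∫ ω, g' (x₀ + σ * U ω) ∂μ := by
  have hgc : Continuous g := by
    have : Differentiable ℝ g := fun x => (hg x).differentiableAt
    exact this.continuous
  have haff : Continuous (fun u : ℝ => x₀ + σ * u) :=
    continuous_const.add (continuous_const.mul continuous_id)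
  have hg'm : Measurable g' := by
    have hgd : g' = deriv g := funext fun x => ((hg x).deriv).symm
    rw [hgd]; exact measurable_deriv g
  have m1 : AEStronglyMeasurable (fun u : ℝ => (g (x₀ + σ * u) - x₀) ^ 2)
      (Measure.map U μ) :=
    (((hgc.comp haff).sub continuous_const).pow 2).aestronglyMeasurable
  have m2 : AEStronglyMeasurable (fun u : ℝ => (g (x₀ + σ * u) - (x₀ + σ * u)) ^ 2)
      (Measure.map U μ) :=
    (((hgc.comp haff).sub haff).pow 2).aestronglyMeasurable
  have m3 : AEStronglyMeasurable (fun u : ℝ => g' (x₀ + σ * u)) (Measure.map U μ) :=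
    (hg'm.comp (measurable_const.add (measurable_const.mul measurable_id))).aestronglyMeasurable
  have hA : Integrable (fun u => g' (x₀ + σ * u)) (gaussianReal 0 1) := by
    rw [← hUlaw, integrable_map_measure m3 hU.aemeasurable]
    exact hint_g'
  have hB : Integrable (fun u => (g (x₀ + σ * u) - x₀) ^ 2) (gaussianReal 0 1) := by
    rw [← hUlaw, integrable_map_measure m1 hU.aemeasurable]
    exact hint1
  have hC : Integrable (fun u => (g (x₀ + σ * u) - (x₀ + σ * u)) ^ 2) (gaussianReal 0 1) := by
    rw [← hUlaw, integrable_map_measure m2 hU.aemeasurable]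
    exact hint2
  have key := key_gaussian x₀ σ hσ g g' hg hA hB hC
  rw [← hUlaw] at key
  rw [integral_map hU.aemeasurable m1, integral_map hU.aemeasurable m2,
    integral_map hU.aemeasurable m3] at key
  exact key
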